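/- Let f_90 be the local rule f_90(a,b,c) = a + c. For every integer n ≥ 1 and all a, b ∈ Q, the fixed-boundary transition function (f_90)_{(n),a-b} : Q^n → Q^n is bijective if and only if n is even; that is, CA-90_{a-b}(n) is reversible iff n ≡ 0 (mod 2). -/
import Mathlib


/-- The state set `Q = {0,1}` as `ZMod 2`. -/
abbrev Q : Type := ZMod 2

/-- A triplet local rule `f : Q³ → Q`. -/
abbrev Rule : Type := Q → Q → Q → Q

/-- A configuration of length `n`. -/
abbrev Config (n : ℕ) : Type := Fin n → Q

/-- The transition sending `x` to the word whose `i`-th letter is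
`f (x (i-1)) (x i) (x (i+1))`, where the virtual boundary letters
`x₀` and `x_{n+1}` are given as `x0` and `xn1`. -/
def caTrans {n : ℕ} (f : Rule) (x0 xn1 : Q) (x : Config n) : Config n :=
  fun i =>
    f (if _h : i.1 = 0 then x0
       else x ⟨i.1 - 1, Nat.lt_of_le_of_lt (Nat.sub_le _ _) i.isLt⟩)
      (x i)
      (if h : i.1 + 1 < n then x ⟨i.1 + 1, h⟩ else xn1)

/-- The first letter `x₁` of a nonempty configuration. -/
def firstCell {n : ℕ} (hn : 0 < n) (x : Config n) : Q := x ⟨0, hn⟩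

/-- The last letter `xₙ` of a nonempty configuration. -/
def lastCell {n : ℕ} (hn : 0 < n) (x : Config n) : Q :=
  x ⟨n - 1, Nat.sub_lt hn Nat.one_pos⟩

/-- Fixed boundary `a-b` : `x₀ = a`, `x_{n+1} = b`. -/
def fixedBC {n : ℕ} (f : Rule) (a b : Q) : Config n → Config n :=
  fun x => caTrans f a b x

/-- Boundary `a-*` : `x₀ = a`, `x_{n+1} = xₙ`. -/
def leftFixedBC {n : ℕ} (hn : 0 < n) (f : Rule) (a : Q) : Config n → Config n :=
  fun x => caTrans f a (lastCell hn x) x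

/-- Boundary `*-b` : `x₀ = x₁`, `x_{n+1} = b`. -/
def rightFixedBC {n : ℕ} (hn : 0 < n) (f : Rule) (b : Q) : Config n → Config n :=
  fun x => caTrans f (firstCell hn x) b x

/-- Free boundary `*-*` : `x₀ = x₁`, `x_{n+1} = xₙ`. -/
def freeBC {n : ℕ} (hn : 0 < n) (f : Rule) : Config n → Config n :=
  fun x => caTrans f (firstCell hn x) (lastCell hn x) x

/-- Cyclic boundary `*` : `x₀ = xₙ`, `x_{n+1} = x₁`. -/
def cyclicBC {n : ℕ} (hn : 0 < n) (f : Rule) : Config n → Config n :=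
  fun x => caTrans f (lastCell hn x) (firstCell hn x) x

/-- Rule 90 : `f(a,b,c) = a + c`. -/
def f90 : Rule := fun a _ c => a + c

lemma q_add_cancel : ∀ u v : Q, u + v = 0 → u = v := by decide
lemma q_swap : ∀ p q r s : Q, p + r = q + s → r + s = p + q := by decide

theorem statement8 (n : ℕ) (hn : 1 ≤ n) (a b : Q) :
    Function.Bijective (fixedBC (n := n) f90 a b) ↔ n % 2 = 0 := by
  constructor
  · intro hbij
    by_contra hodd
    have hodd' : n % 2 = 1 := by omega
    set z : Config n := fun i => if i.1 % 2 = 0 then 1 else 0 with hz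
    have h0 : fixedBC (n := n) f90 a b z = fixedBC (n := n) f90 a b 0 := by
      funext i
      simp only [fixedBC, caTrans, f90]
      by_cases h1 : i.1 = 0 <;> by_cases h2 : i.1 + 1 < n <;>
        simp only [h1, h2, dif_pos, dif_neg, not_false_iff, hz, Pi.zero_apply]
      · -- i = 0, i+1 < n : right letter z 1 = 0
        have : (1 : ℕ) % 2 ≠ 0 := by omega
        simp [h1, this]
      · simp
      · -- middle: z(i-1) + z(i+1)
        have : (i.1 - 1) % 2 = (i.1 + 1) % 2 := by omega
        by_cases hp : (i.1 - 1) % 2 = 0 <;> simp [hp, this ▸ hp, ← this] <;> decide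
      · -- last cell: i.1 = n - 1, i-1 = n-2 odd since n odd
        have : (i.1 - 1) % 2 ≠ 0 := by have := i.isLt; omega
        simp [this]
    have hz0 : z = 0 := hbij.1 h0
    have : z ⟨0, hn⟩ = 0 := by rw [hz0]; rfl
    simp [hz] at this
  · intro heven
    have hn2 : 2 ≤ n := by omega
    rw [← Finite.injective_iff_bijective]
    intro x y hxy
    set Z : ℕ → Q := fun j => if h : j < n then x ⟨j, h⟩ + y ⟨j, h⟩ else 0 with hZ
    have key : ∀ i : Fin n, fixedBC (n := n) f90 a b x i = fixedBC (n := n) f90 a b y i :=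
      fun i => congrFun hxy i
    -- Z 1 = 0
    have hZ1 : Z 1 = 0 := by
      have h := key ⟨0, by omega⟩
      simp only [fixedBC, caTrans, f90] at h
      have h1 : (0 : ℕ) + 1 < n := by omega
      simp only [dif_pos rfl, dif_pos h1] at h
      have := add_left_cancel h
      simp only [hZ, dif_pos (show (1:ℕ) < n by omega)]
      rw [this]; exact CharTwo.add_self_eq_zero _
    -- Z (n-2) = 0
    have hZlast : Z (n - 2) = 0 := by
      have h := key ⟨n - 1, by omega⟩
      simp only [fixedBC, caTrans, f90] at h
      have h1 : ¬ (n - 1 = 0) := by omega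
      have h2 : ¬ (n - 1 + 1 < n) := by omega
      simp only [dif_neg h1, dif_neg h2] at h
      have := add_right_cancel h
      simp only [hZ, dif_pos (show n - 2 < n by omega)]
      have e : n - 1 - 1 = n - 2 := by omega
      rw [show (⟨n - 1 - 1, _⟩ : Fin n) = ⟨n - 2, by omega⟩ from by simp [Fin.ext_iff, e]] at this
      rw [this]; exact CharTwo.add_self_eq_zero _
    -- step
    have hstep : ∀ i, i + 2 < n → Z (i + 2) = Z i := by
      intro i hi
      have h := key ⟨i + 1, by omega⟩
      simp only [fixedBC, caTrans, f90] at h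
      have h1 : ¬ (i + 1 = 0) := by omega
      have h2 : i + 1 + 1 < n := by omega
      simp only [dif_neg h1, dif_pos h2] at h
      simp only [hZ, dif_pos hi, dif_pos (show i < n by omega)]
      exact q_swap _ _ _ _ h
    -- chain
    have hchain : ∀ k j, j + 2 * k < n → Z (j + 2 * k) = Z j := by
      intro k
      induction k with
      | zero => intro j _; rfl
      | succ m ih =>
        intro j hj
        have e : j + 2 * (m + 1) = (j + 2 * m) + 2 := by ring
        rw [e, hstep _ (by omega)]
        exact ih j (by omega)
    have hZall : ∀ j, j < n → Z j = 0 := by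
      intro j hj
      rcases Nat.even_or_odd j with he | ho
      · obtain ⟨k, hk⟩ := he
        have hjle : j ≤ n - 2 := by omega
        have : Z (n - 2) = Z j := by
          have := hchain ((n - 2 - j) / 2) j (by omega)
          rwa [show j + 2 * ((n - 2 - j) / 2) = n - 2 by omega] at this
        rw [← this]; exact hZlast
      · obtain ⟨k, hk⟩ := ho
        have : Z j = Z 1 := by
          have := hchain k 1 (by omega)
          rwa [show (1 : ℕ) + 2 * k = j by omega] at this
        rw [this]; exact hZ1
    funext i
    have h := hZall i.1 i.isLt
    simp only [hZ, dif_pos i.isLt] at h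
    exact q_add_cancel _ _ (by simpa using h)
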